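/- An irreducible representation of so(2k+1) (k ≥ 1) factors through so(2k+1) = spin(2k+1)/center (i.e., is not of spin type) if and only if it has 0 as a weight. -/

import Mathlib

open scoped Matrix
open Complex

noncomputable section

/-- The standard Cartan generators `H_i = E_{2i,2i+1} - E_{2i+1,2i}` of
`so(2k+1, ℂ)` (skew-symmetric matrices), `i = 0, …, k-1`. -/
def Hmat (k : ℕ) (i : Fin k) : Matrix (Fin (2 * k + 1)) (Fin (2 * k + 1)) ℂ :=
  Matrix.single ⟨2 * i.val, by omega⟩ ⟨2 * i.val + 1, by omega⟩ 1 -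
    Matrix.single ⟨2 * i.val + 1, by omega⟩ ⟨2 * i.val, by omega⟩ 1

namespace Stmt13Aux

attribute [local instance 100] LieRing.ofAssociativeRing

open Matrix Module

universe u

variable {N : Type*} [DecidableEq N] [Fintype N]

/-- Elementary skew-symmetric matrix `E_{pq} - E_{qp}`. -/
def S (p q : N) : Matrix N N ℂ :=
  Matrix.single p q 1 - Matrix.single q p 1

omit [Fintype N] in
lemma S_transpose (p q : N) : (S p q)ᵀ = -(S p q) := by
  ext x y
  simp only [S, transpose_apply, Matrix.sub_apply, Matrix.neg_apply, Matrix.single]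
  by_cases h1 : p = x <;> by_cases h2 : q = y <;> by_cases h3 : p = y <;> by_cases h4 : q = x <;>
    simp [Matrix.of_apply, h1, h2, h3, h4] <;> aesop

lemma bra_cyc {p q r : N} (hpq : p ≠ q) (hqr : q ≠ r) (hpr : p ≠ r) :
    ⁅S p q, S q r⁆ = S p r := by
  simp only [Ring.lie_def, S, sub_mul, mul_sub]
  rw [Matrix.single_mul_single_same,
    Matrix.single_mul_single_of_ne (h := hqr),
    Matrix.single_mul_single_of_ne (h := hpq),
    Matrix.single_mul_single_of_ne (h := hpr),
    Matrix.single_mul_single_of_ne (h := hpr.symm),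
    Matrix.single_mul_single_of_ne (h := hqr.symm),
    Matrix.single_mul_single_of_ne (h := hpq.symm),
    Matrix.single_mul_single_same, one_mul]
  abel

lemma bra_disj {p q r s : N} (h1 : q ≠ r) (h2 : q ≠ s) (h3 : p ≠ r) (h4 : p ≠ s) :
    ⁅S p q, S r s⁆ = 0 := by
  simp only [Ring.lie_def, S, sub_mul, mul_sub]
  rw [Matrix.single_mul_single_of_ne (h := h1), Matrix.single_mul_single_of_ne (h := h2),
    Matrix.single_mul_single_of_ne (h := h3), Matrix.single_mul_single_of_ne (h := h4),
    Matrix.single_mul_single_of_ne (h := h1.symm), Matrix.single_mul_single_of_ne (h := h2.symm),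
    Matrix.single_mul_single_of_ne (h := h3.symm), Matrix.single_mul_single_of_ne (h := h4.symm)]
  abel

lemma stdBasis_mul_apply (p q x y : N) (M : Matrix N N ℂ) :
    (Matrix.single p q (1:ℂ) * M) x y = if x = p then M q y else 0 := by
  split
  · next h => subst h; rw [Matrix.single_mul_apply_same, one_mul]
  · next h => rw [Matrix.single_mul_apply_of_ne _ _ _ _ _ h]

lemma mul_stdBasis_apply (p q x y : N) (M : Matrix N N ℂ) :
    (M * Matrix.single p q (1:ℂ)) x y = if y = q then M x p else 0 := by
  split
  · next h => subst h; rw [Matrix.mul_single_apply_same, mul_one]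
  · next h => rw [Matrix.mul_single_apply_of_ne _ _ _ _ _ h]

/-- `ad` of the elementary skew matrix. -/
def adS (p q : N) (M : Matrix N N ℂ) : Matrix N N ℂ := S p q * M - M * S p q

lemma adS_apply (p q : N) (M : Matrix N N ℂ) (x y : N) :
    adS p q M x y =
      ((if x = p then M q y else 0) - (if x = q then M p y else 0))
        - ((if y = q then M x p else 0) - (if y = p then M x q else 0)) := by
  simp only [adS, S, sub_mul, mul_sub, Matrix.sub_apply, stdBasis_mul_apply, mul_stdBasis_apply]

set_option maxHeartbeats 1000000 in
lemma adS_cube {a b : N} (hab : a ≠ b) {A : Matrix N N ℂ} (hA : Aᵀ = -A) :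
    adS a b (adS a b (adS a b A)) = - adS a b A := by
  have hskew : ∀ x y : N, A x y = - A y x := fun x y => by
    have := congrFun (congrFun hA y) x; simpa [Matrix.transpose_apply] using this
  have haa : A a a = 0 := by have := hskew a a; linear_combination this / 2
  have hbb : A b b = 0 := by have := hskew b b; linear_combination this / 2
  have hba : A b a = - A a b := hskew b a
  ext x y
  simp only [adS_apply, Matrix.neg_apply]
  by_cases hxa : x = a <;> by_cases hxb : x = b <;> by_cases hya : y = a <;> by_cases hyb : y = b <;>
    simp [hxa, hxb, hya, hyb, hab, hab.symm, haa, hbb, hba]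

omit [Fintype N] in
lemma skew_smul {A : Matrix N N ℂ} (hA : Aᵀ = -A) (c : ℂ) : (c • A)ᵀ = -(c • A) := by
  rw [Matrix.transpose_smul, hA, smul_neg]

omit [Fintype N] in
lemma skew_add {A B : Matrix N N ℂ} (hA : Aᵀ = -A) (hB : Bᵀ = -B) : (A + B)ᵀ = -(A + B) := by
  rw [Matrix.transpose_add, hA, hB, neg_add]

omit [Fintype N] in
lemma skew_sub {A B : Matrix N N ℂ} (hA : Aᵀ = -A) (hB : Bᵀ = -B) : (A - B)ᵀ = -(A - B) := by
  rw [Matrix.transpose_sub, hA, hB, neg_sub, neg_sub_neg]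

omit [Fintype N] in
lemma skew_neg {A : Matrix N N ℂ} (hA : Aᵀ = -A) : (-A)ᵀ = -(-A) := by
  rw [Matrix.transpose_neg, hA]

lemma skew_bra {A B : Matrix N N ℂ} (hA : Aᵀ = -A) (hB : Bᵀ = -B) :
    (A * B - B * A)ᵀ = -(A * B - B * A) := by
  rw [Matrix.transpose_sub, Matrix.transpose_mul, Matrix.transpose_mul, hA, hB]
  simp [mul_neg, neg_mul]



omit [Fintype N] in
lemma S_symm (p q : N) : S q p = - S p q := by
  simp only [S, neg_sub]

lemma adS_add (p q : N) (M M' : Matrix N N ℂ) :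
    adS p q (M + M') = adS p q M + adS p q M' := by
  simp only [adS, mul_add, add_mul]
  abel

lemma adS_sub (p q : N) (M M' : Matrix N N ℂ) :
    adS p q (M - M') = adS p q M - adS p q M' := by
  simp only [adS, mul_sub, sub_mul]
  abel

lemma adS_smul (p q : N) (c : ℂ) (M : Matrix N N ℂ) :
    adS p q (c • M) = c • adS p q M := by
  simp only [adS, Matrix.mul_smul, Matrix.smul_mul, smul_sub]

/- ### Endomorphism-level lemmas -/

variable {V : Type u} [AddCommGroup V] [Module ℂ V]

lemma mapsTo_maxGen (h x : Module.End ℂ V) (s : ℂ) (hx : h * x - x * h = s • x)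
    (μ : ℂ) {v : V} (hv : v ∈ h.maxGenEigenspace μ) :
    x v ∈ h.maxGenEigenspace (μ + s) := by
  rw [Module.End.mem_maxGenEigenspace] at hv ⊢
  obtain ⟨m, hm⟩ := hv
  refine ⟨m, ?_⟩
  have hsemi : SemiconjBy x (h - μ • 1) (h - (μ + s) • 1) := by
    have hx' : h * x = x * h + s • x := by rw [← hx]; abel
    simp only [SemiconjBy, mul_sub, sub_mul]
    rw [mul_smul_comm, mul_one, smul_mul_assoc, one_mul, hx']
    module
  calc ((h - (μ + s) • 1) ^ m) (x v) = (((h - (μ + s) • 1) ^ m) * x) v := rfl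
    _ = (x * ((h - μ • 1) ^ m)) v := by rw [← hsemi.pow_right m]
    _ = x (((h - μ • 1) ^ m) v) := rfl
    _ = 0 := by rw [hm, map_zero]

lemma eigen_pow_shift (h g : Module.End ℂ V) (δ μ : ℂ)
    (hrel : h * g - g * h = δ • g) {v : V} (hv : h v = μ • v) (j : ℕ) :
    h ((g ^ j) v) = (μ + j * δ) • ((g ^ j) v) := by
  have hg : ∀ w : V, h (g w) = g (h w) + δ • g w := fun w => by
    have h1 := congrFun (congrArg (fun (f : Module.End ℂ V) => (f : V → V)) hrel) w
    simp only [LinearMap.sub_apply, Module.End.mul_apply, LinearMap.smul_apply] at h1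
    have h2 := sub_eq_iff_eq_add.mp h1
    rw [h2]; abel
  induction j with
  | zero => simpa using hv
  | succ j ih =>
    have hpow : (g ^ (j+1)) v = g ((g ^ j) v) := by
      rw [pow_succ', Module.End.mul_apply]
    rw [hpow, hg, ih, _root_.map_smul]
    push_cast
    match_scalars
    ring

lemma exists_pow_ne_zero_pow_succ_eq_zero [FiniteDimensional ℂ V]
    (h g : Module.End ℂ V) (δ μ : ℂ) (hδ : δ ≠ 0)
    (hrel : h * g - g * h = δ • g) {v : V} (hv0 : v ≠ 0) (hv : h v = μ • v) :
    ∃ r : ℕ, (g ^ r) v ≠ 0 ∧ (g ^ (r + 1)) v = 0 := by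
  have hall : ∃ t : ℕ, (g ^ t) v = 0 := by
    by_contra hc
    push_neg at hc
    have hind : LinearIndependent ℂ (fun j : ℕ => (g ^ j) v) := by
      apply Module.End.eigenvectors_linearIndependent' h (fun j : ℕ => μ + j * δ)
      · intro j₁ j₂ hj
        simp only at hj
        have h2 : (j₁ : ℂ) * δ = (j₂ : ℂ) * δ := by linear_combination hj
        have h3 := mul_right_cancel₀ hδ h2
        exact_mod_cast h3
      · intro j
        exact ⟨Module.End.mem_eigenspace_iff.mpr (eigen_pow_shift h g δ μ hrel hv j), hc j⟩
    exact Module.Finite.not_linearIndependent_of_infinite _ hind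
  classical
  have ht₀ : (g ^ Nat.find hall) v = 0 := Nat.find_spec hall
  have ht₀pos : Nat.find hall ≠ 0 := by
    intro h0
    rw [h0] at ht₀; simp at ht₀; exact hv0 ht₀
  refine ⟨Nat.find hall - 1,
    Nat.find_min hall (Nat.sub_lt (Nat.pos_of_ne_zero ht₀pos) one_pos), ?_⟩
  rw [Nat.sub_add_cancel (Nat.one_le_iff_ne_zero.mpr ht₀pos)]
  exact ht₀

lemma sl2_primitive [FiniteDimensional ℂ V] (e f h : Module.End ℂ V)
    (hf : h * f - f * h = (-2 : ℂ) • f) (hef : e * f - f * e = h)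
    {w : V} (hw : w ≠ 0) (hew : e w = 0) (μ : ℂ) (hμ : h w = μ • w) :
    ∃ s : ℕ, μ = s ∧ ∀ j ≤ s, (f ^ j) w ≠ 0 := by
  have hc : ∀ x : V, e (f x) = f (e x) + h x := fun x => by
    have h1 := congrFun (congrArg (fun (φ : Module.End ℂ V) => (φ : V → V)) hef) x
    simp only [LinearMap.sub_apply, Module.End.mul_apply] at h1
    have h2 := sub_eq_iff_eq_add.mp h1
    rw [h2]; abel
  have hQ : ∀ j : ℕ, e ((f ^ (j + 1)) w) = (((j : ℂ) + 1) * (μ - j)) • ((f ^ j) w) := by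
    intro j
    induction j with
    | zero =>
      rw [show (f ^ 1) w = f w by rw [pow_one], hc, hew, map_zero, zero_add, hμ, pow_zero]
      simp only [Module.End.one_apply]
      match_scalars
      push_cast
      ring
    | succ j ih =>
      have hpow : (f ^ (j + 2)) w = f ((f ^ (j+1)) w) := by rw [pow_succ', Module.End.mul_apply]
      have hsh := eigen_pow_shift h f (-2 : ℂ) μ hf hμ (j + 1)
      rw [hpow, hc, ih, _root_.map_smul, hsh]
      rw [show (f ^ (j+1)) w = f ((f ^ j) w) by rw [pow_succ', Module.End.mul_apply]]
      match_scalars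
      push_cast
      ring
  obtain ⟨r, hr0, hr1⟩ := exists_pow_ne_zero_pow_succ_eq_zero h f (-2 : ℂ) μ (by norm_num) hf hw hμ
  have hQr := hQ r
  rw [hr1, map_zero] at hQr
  have hcoef : ((r : ℂ) + 1) * (μ - r) = 0 := by
    by_contra hcc
    exact hr0 (by
      have := smul_eq_zero.mp hQr.symm
      tauto)
  have hμr : μ = r := by
    rcases mul_eq_zero.mp hcoef with hc' | hc'
    · exact absurd hc' (Nat.cast_add_one_ne_zero r)
    · linear_combination hc'
  refine ⟨r, hμr, fun j hj => ?_⟩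
  intro hz
  apply hr0
  have : (f ^ r) w = (f ^ (r - j)) ((f ^ j) w) := by
    rw [← Module.End.mul_apply, ← pow_add, Nat.sub_add_cancel hj]
  rw [this, hz, map_zero]

lemma exists_common_eigenvector :
    ∀ {k : ℕ} {V : Type u} [AddCommGroup V] [Module ℂ V]
      [FiniteDimensional ℂ V] [Nontrivial V] (f : Fin k → Module.End ℂ V),
      (∀ i j, Commute (f i) (f j)) →
      ∃ (v : V) (c : Fin k → ℂ), v ≠ 0 ∧ ∀ i, f i v = c i • v := by
  intro k
  induction k with
  | zero =>
    intro V _ _ _ _ f _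
    obtain ⟨v, hv⟩ := exists_ne (0 : V)
    exact ⟨v, Fin.elim0, hv, fun i => i.elim0⟩
  | succ k ih =>
    intro V _ _ _ _ f hcomm
    obtain ⟨μ, hμ⟩ := Module.End.exists_eigenvalue (f 0)
    set E := (f 0).eigenspace μ with hE
    have hmap : ∀ j : Fin k, ∀ x ∈ E, f j.succ x ∈ E := by
      intro j x hx
      rw [hE, Module.End.mem_eigenspace_iff] at hx ⊢
      calc f 0 (f j.succ x) = (f 0 * f j.succ) x := rfl
        _ = (f j.succ * f 0) x := by rw [hcomm 0 j.succ]
        _ = f j.succ (μ • x) := by rw [Module.End.mul_apply, hx]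
        _ = μ • f j.succ x := _root_.map_smul _ _ _
    have hEne : Nontrivial E := Submodule.nontrivial_iff_ne_bot.mpr hμ
    let g : Fin k → Module.End ℂ E := fun j => (f j.succ).restrict (hmap j)
    have h1 : ∀ (i j : Fin k) (x : E), ((g i * g j) x : V) = f i.succ (f j.succ x) := by
      intro i j x
      simp [g, Module.End.mul_apply, LinearMap.restrict_apply]
    have hgcomm : ∀ i j, Commute (g i) (g j) := by
      intro i j
      ext x
      show ((g i * g j) x : V) = ((g j * g i) x : V)
      calc ((g i * g j) x : V) = f i.succ (f j.succ x) := h1 i j x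
        _ = (f i.succ * f j.succ) (x : V) := rfl
        _ = (f j.succ * f i.succ) (x : V) := by rw [hcomm i.succ j.succ]
        _ = f j.succ (f i.succ x) := rfl
        _ = ((g j * g i) x : V) := (h1 j i x).symm
    obtain ⟨v, c, hv0, hvc⟩ := ih g hgcomm
    refine ⟨(v : V), Fin.cons μ c, ?_, ?_⟩
    · intro h0
      exact hv0 (Subtype.ext (by simpa using h0))
    · intro i
      refine Fin.cases ?_ ?_ i
      · simpa [Fin.cons] using Module.End.mem_eigenspace_iff.mp v.2
      · intro j
        have := congrArg (Subtype.val) (hvc j)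
        simpa [g, LinearMap.restrict_apply, Fin.cons_succ] using this

lemma sl2_reach_zero {V : Type u} [AddCommGroup V] [Module ℂ V] [FiniteDimensional ℂ V]
    (e f h : Module.End ℂ V)
    (he : h * e - e * h = (2 : ℂ) • e) (hf : h * f - f * h = (-2 : ℂ) • f)
    (hef : e * f - f * e = h)
    {u : V} (hu : u ≠ 0) (n : ℤ) (hun : h u = ((2 * n : ℤ) : ℂ) • u) :
    ∃ r t : ℕ, (f ^ t) ((e ^ r) u) ≠ 0 ∧ h ((f ^ t) ((e ^ r) u)) = 0 := by
  obtain ⟨r, hr0, hr1⟩ := exists_pow_ne_zero_pow_succ_eq_zero h e (2 : ℂ)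
    ((2 * n : ℤ) : ℂ) (by norm_num) he hu hun
  set w := (e ^ r) u with hw
  have hew : e w = 0 := by
    rw [hw, ← Module.End.mul_apply, ← pow_succ']
    exact hr1
  have hμw : h w = (((2 * n : ℤ) : ℂ) + r * 2) • w :=
    eigen_pow_shift h e (2 : ℂ) _ he hun r
  obtain ⟨s, hs, hsj⟩ := sl2_primitive e f h hf hef hr0 hew _ hμw
  have hsz : (s : ℤ) = 2 * n + 2 * r := by
    have hcast : (((2 * n : ℤ) : ℂ) + r * 2) = (((2 * n + 2 * r : ℤ) : ℂ)) := by push_cast; ring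
    rw [hcast] at hs
    exact_mod_cast hs.symm
  obtain ⟨t, ht⟩ : ∃ t : ℕ, s = 2 * t := ⟨s / 2, by omega⟩
  refine ⟨r, t, hsj t (by omega), ?_⟩
  have hsh := eigen_pow_shift h f (-2 : ℂ) _ hf hμw t
  rw [hsh]
  have hz : (((2 * n : ℤ) : ℂ) + r * 2 + t * (-2)) = 0 := by
    have h1 : ((s : ℂ)) = 2 * n + 2 * r := by exact_mod_cast congrArg (fun z : ℤ => (z : ℂ)) hsz
    have h2 : (s : ℂ) = 2 * t := by exact_mod_cast congrArg (fun z : ℕ => (z : ℂ)) ht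
    rw [h2] at h1
    push_cast at h1 ⊢
    linear_combination -h1
  rw [hz, zero_smul]

end Stmt13Aux

open Stmt13Aux

/-- An irreducible (finite-dimensional) representation of
`so(2k+1)` (`k ≥ 1`) factors through `SO(2k+1) = Spin(2k+1)/center`, i.e. is *not* of
spin type — equivalently, all its weights are integral: every simultaneous eigenvalue
system `c` of the Cartan generators `H_i` satisfies `c i ∈ ℤ·i` — if and only if it has
`0` as a weight, i.e. there is a nonzero simultaneous null vector of the `H_i`. -/
theorem stmt13 (k : ℕ) (hk : 1 ≤ k) (V : Type*) [AddCommGroup V] [Module ℂ V]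
    [FiniteDimensional ℂ V] [Nontrivial V]
    (φ : Matrix (Fin (2 * k + 1)) (Fin (2 * k + 1)) ℂ →ₗ[ℂ] Module.End ℂ V)
    -- `φ` restricts to a Lie algebra representation of `so(2k+1,ℂ)`
    (hrep : ∀ A B : Matrix (Fin (2 * k + 1)) (Fin (2 * k + 1)) ℂ,
      Aᵀ = -A → Bᵀ = -B → φ ⁅A, B⁆ = ⁅φ A, φ B⁆)
    -- irreducibility
    (hirr : ∀ W : Submodule ℂ V,
      (∀ A : Matrix (Fin (2 * k + 1)) (Fin (2 * k + 1)) ℂ, Aᵀ = -A →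
        ∀ v ∈ W, φ A v ∈ W) → W = ⊥ ∨ W = ⊤) :
    -- all weights are integral (not of spin type) ↔ 0 is a weight
    (∀ c : Fin k → ℂ, (∃ v : V, v ≠ 0 ∧ ∀ i, φ (Hmat k i) v = c i • v) →
        ∀ i, ∃ n : ℤ, c i = n * I) ↔
      (∃ v : V, v ≠ 0 ∧ ∀ i, φ (Hmat k i) v = 0) := by
  classical
  letI : LieRing (Matrix (Fin (2 * k + 1)) (Fin (2 * k + 1)) ℂ) := LieRing.ofAssociativeRing
  have hskewHmat : ∀ j : Fin k, (Hmat k j)ᵀ = -(Hmat k j) := by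
    intro j
    have h1 : Hmat k j = S ⟨2 * j.val, by omega⟩ ⟨2 * j.val + 1, by omega⟩ := rfl
    rw [h1]
    exact S_transpose _ _
  constructor
  · -- all weights integral → 0 is a weight
    intro hInt
    have key : ∀ m : ℕ, m ≤ k → ∃ (u : V) (d : Fin k → ℂ), u ≠ 0 ∧
        (∀ j, φ (Hmat k j) u = d j • u) ∧ (∀ j : Fin k, (j : ℕ) < m → d j = 0) := by
      intro m
      induction m with
      | zero =>
        intro _
        have hcomm : ∀ i j : Fin k, Commute (φ (Hmat k i)) (φ (Hmat k j)) := by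
          intro i j
          rcases eq_or_ne i j with rfl | hij
          · exact Commute.refl _
          · have hval : i.val ≠ j.val := fun h => hij (Fin.ext h)
            have hb : ⁅Hmat k i, Hmat k j⁆ = 0 := by
              have h1 : Hmat k i = S ⟨2 * i.val, by omega⟩ ⟨2 * i.val + 1, by omega⟩ := rfl
              have h2 : Hmat k j = S ⟨2 * j.val, by omega⟩ ⟨2 * j.val + 1, by omega⟩ := rfl
              rw [h1, h2]
              exact bra_disj (by simp [Fin.ext_iff]; omega) (by simp [Fin.ext_iff]; omega)
                (by simp [Fin.ext_iff]; omega) (by simp [Fin.ext_iff]; omega)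
            have h3 := hrep _ _ (hskewHmat i) (hskewHmat j)
            rw [hb, map_zero] at h3
            have h4 : φ (Hmat k i) * φ (Hmat k j) - φ (Hmat k j) * φ (Hmat k i) = 0 := by
              rw [← Ring.lie_def, ← h3]
            exact sub_eq_zero.mp h4
        obtain ⟨v, c, hv, hvc⟩ := exists_common_eigenvector (fun j => φ (Hmat k j)) hcomm
        exact ⟨v, c, hv, hvc, fun j hj => absurd hj (Nat.not_lt_zero _)⟩
      | succ m ihm =>
        intro hm1
        obtain ⟨u, d, hu, hud, hdz⟩ := ihm (by omega)
        have hmk : m < k := by omega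
        let i : Fin k := ⟨m, hmk⟩
        obtain ⟨n, hdn⟩ := hInt d ⟨u, hu, hud⟩ i
        let a : Fin (2*k+1) := ⟨2*m, by omega⟩
        let b : Fin (2*k+1) := ⟨2*m+1, by omega⟩
        let cc : Fin (2*k+1) := ⟨2*k, by omega⟩
        have hab : a ≠ b := by simp [a, b, Fin.ext_iff]
        have hbc : b ≠ cc := by simp [b, cc, Fin.ext_iff]; omega
        have hac : a ≠ cc := by simp [a, cc, Fin.ext_iff]; omega
        have hSab : S a b = Hmat k i := rfl
        -- the sl2-triple matrices
        set Esl : Matrix (Fin (2*k+1)) (Fin (2*k+1)) ℂ := S b cc - I • S a cc with hEsl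
        set Fsl : Matrix (Fin (2*k+1)) (Fin (2*k+1)) ℂ := -(S b cc) - I • S a cc with hFsl
        set Hsl : Matrix (Fin (2*k+1)) (Fin (2*k+1)) ℂ := (-(2:ℂ) * I) • S a b with hHsl
        have skewE : Eslᵀ = -Esl := skew_sub (S_transpose _ _) (skew_smul (S_transpose _ _) I)
        have skewF : Fslᵀ = -Fsl :=
          skew_sub (skew_neg (S_transpose _ _)) (skew_smul (S_transpose _ _) I)
        have skewH : Hslᵀ = -Hsl := skew_smul (S_transpose _ _) _
        have h12 : ⁅S a b, S b cc⁆ = S a cc := bra_cyc hab hbc hac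
        have h13 : ⁅S a b, S a cc⁆ = -(S b cc) := by
          rw [S_symm cc a, lie_neg, ← lie_skew, bra_cyc hac.symm hab (Ne.symm hbc), S_symm b cc]
          abel
        have h23 : ⁅S b cc, S a cc⁆ = S a b := by
          rw [S_symm cc a, lie_neg, bra_cyc hbc hac.symm hab.symm, S_symm a b]
          abel
        have R1 : ⁅Hsl, Esl⁆ = (2:ℂ) • Esl := by
          rw [hHsl, hEsl, smul_lie, lie_sub, lie_smul, h12, h13]
          match_scalars <;> simp [Complex.I_sq] <;> ring_nf <;>
            simp [Complex.I_sq] <;> ring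
        have R2 : ⁅Hsl, Fsl⁆ = (-2:ℂ) • Fsl := by
          rw [hHsl, hFsl, smul_lie, lie_sub, lie_smul, lie_neg, h12, h13]
          match_scalars <;> simp [Complex.I_sq] <;> ring_nf <;>
            simp [Complex.I_sq] <;> ring
        have hacbc : ⁅S a cc, S b cc⁆ = -(S a b) := by rw [← lie_skew, h23]
        have R3 : ⁅Esl, Fsl⁆ = Hsl := by
          rw [hHsl, hEsl, hFsl]
          simp only [lie_sub, sub_lie, lie_neg, neg_lie, lie_smul, smul_lie, lie_self,
            h23, hacbc]
          match_scalars <;> simp [Complex.I_sq] <;> ring_nf <;>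
            simp [Complex.I_sq] <;> ring
        -- endomorphisms
        set eE := φ Esl with heE
        set fE := φ Fsl with hfE
        set hE := φ Hsl with hhE
        have hrelE : hE * eE - eE * hE = (2:ℂ) • eE := by
          have h3 := hrep Hsl Esl skewH skewE
          rw [R1, map_smul, Ring.lie_def] at h3
          rw [← heE, ← hhE] at h3
          exact h3.symm
        have hrelF : hE * fE - fE * hE = (-2:ℂ) • fE := by
          have h3 := hrep Hsl Fsl skewH skewF
          rw [R2, map_smul, Ring.lie_def] at h3
          rw [← hfE, ← hhE] at h3
          exact h3.symm
        have hrelEF : eE * fE - fE * eE = hE := by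
          have h3 := hrep Esl Fsl skewE skewF
          rw [R3, Ring.lie_def] at h3
          rw [← heE, ← hfE, ← hhE] at h3
          exact h3.symm
        have hscalar : (-(2:ℂ) * I) * (n * I) = ((2 * n : ℤ) : ℂ) := by
          push_cast
          ring_nf
          rw [Complex.I_sq]
          ring
        have hEu : hE u = ((2 * n : ℤ) : ℂ) • u := by
          rw [hhE, hHsl, map_smul, LinearMap.smul_apply, hSab, hud i, hdn, smul_smul, hscalar]
        obtain ⟨r, t, hw0, hwz⟩ := sl2_reach_zero eE fE hE hrelE hrelF hrelEF hu n hEu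
        set w := (fE ^ t) ((eE ^ r) u) with hwdef
        -- φ (Hmat k i) w = 0
        have hPhiIw : φ (Hmat k i) w = 0 := by
          have h5 : hE w = (-(2:ℂ) * I) • (φ (Hmat k i) w) := by
            rw [hhE, hHsl, map_smul, LinearMap.smul_apply, hSab]
          rw [h5] at hwz
          have h6 : (-(2:ℂ) * I) ≠ 0 := by simp [Complex.I_ne_zero]
          exact (smul_eq_zero.mp hwz).resolve_left h6
        -- for j ≠ i, φ (Hmat k j) w = d j • w
        have hPhiJw : ∀ j : Fin k, j ≠ i → φ (Hmat k j) w = d j • w := by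
          intro j hji
          have hval : j.val ≠ m := fun h => hji (Fin.ext h)
          have hbraE : ⁅Hmat k j, Esl⁆ = 0 := by
            have h1 : Hmat k j = S ⟨2 * j.val, by omega⟩ ⟨2 * j.val + 1, by omega⟩ := rfl
            rw [h1, hEsl, lie_sub, lie_smul]
            rw [bra_disj (by simp [b, Fin.ext_iff]; omega) (by simp [cc, Fin.ext_iff]; omega)
                (by simp [b, Fin.ext_iff]; omega) (by simp [cc, Fin.ext_iff]; omega),
              bra_disj (by simp [a, Fin.ext_iff]; omega) (by simp [cc, Fin.ext_iff]; omega)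
                (by simp [a, Fin.ext_iff]; omega) (by simp [cc, Fin.ext_iff]; omega)]
            simp
          have hbraF : ⁅Hmat k j, Fsl⁆ = 0 := by
            have h1 : Hmat k j = S ⟨2 * j.val, by omega⟩ ⟨2 * j.val + 1, by omega⟩ := rfl
            rw [h1, hFsl, lie_sub, lie_smul, lie_neg]
            rw [bra_disj (by simp [b, Fin.ext_iff]; omega) (by simp [cc, Fin.ext_iff]; omega)
                (by simp [b, Fin.ext_iff]; omega) (by simp [cc, Fin.ext_iff]; omega),
              bra_disj (by simp [a, Fin.ext_iff]; omega) (by simp [cc, Fin.ext_iff]; omega)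
                (by simp [a, Fin.ext_iff]; omega) (by simp [cc, Fin.ext_iff]; omega)]
            simp
          have hcE : Commute (φ (Hmat k j)) eE := by
            have h3 := hrep _ _ (hskewHmat j) skewE
            rw [hbraE, map_zero, Ring.lie_def] at h3
            exact sub_eq_zero.mp h3.symm
          have hcF : Commute (φ (Hmat k j)) fE := by
            have h3 := hrep _ _ (hskewHmat j) skewF
            rw [hbraF, map_zero, Ring.lie_def] at h3
            exact sub_eq_zero.mp h3.symm
          have hcEr := hcE.pow_right r
          have hcFt := hcF.pow_right t
          calc φ (Hmat k j) w = (φ (Hmat k j) * (fE ^ t)) ((eE ^ r) u) := rfl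
            _ = ((fE ^ t) * φ (Hmat k j)) ((eE ^ r) u) := by rw [hcFt.eq]
            _ = (fE ^ t) ((φ (Hmat k j) * (eE ^ r)) u) := rfl
            _ = (fE ^ t) (((eE ^ r) * φ (Hmat k j)) u) := by rw [hcEr.eq]
            _ = (fE ^ t) ((eE ^ r) (φ (Hmat k j) u)) := rfl
            _ = (fE ^ t) ((eE ^ r) (d j • u)) := by rw [hud j]
            _ = d j • w := by rw [_root_.map_smul, _root_.map_smul]
        refine ⟨w, Function.update d i 0, hw0, ?_, ?_⟩
        · intro j
          rcases eq_or_ne j i with rfl | hji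
          · rw [Function.update_self, hPhiIw, zero_smul]
          · rw [Function.update_of_ne hji, hPhiJw j hji]
        · intro j hj
          rcases eq_or_ne j i with rfl | hji
          · rw [Function.update_self]
          · have hval : j.val ≠ m := fun h => hji (Fin.ext h)
            rw [Function.update_of_ne hji]
            exact hdz j (by omega)
    obtain ⟨u, d, hu, hud, hdz⟩ := key k le_rfl
    exact ⟨u, hu, fun j => by rw [hud j, hdz j j.isLt, zero_smul]⟩
  · -- 0 is a weight → all weights integral
    rintro ⟨z, hz0, hz⟩ c ⟨v, hv0, hvc⟩ j
    by_contra hne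
    push_neg at hne
    set hj := φ (Hmat k j) with hhj
    let a : Fin (2*k+1) := ⟨2*j.val, by omega⟩
    let b : Fin (2*k+1) := ⟨2*j.val+1, by omega⟩
    have hab : a ≠ b := by simp [a, b, Fin.ext_iff]
    have hSab : S a b = Hmat k j := rfl
    set W : Submodule ℂ V := ⨆ n : ℤ, hj.maxGenEigenspace ((n : ℂ) * I) with hW
    have hWinv : ∀ A : Matrix (Fin (2 * k + 1)) (Fin (2 * k + 1)) ℂ, Aᵀ = -A →
        ∀ x ∈ W, φ A x ∈ W := by
      intro A hA x hx
      set B := adS a b A with hB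
      set C := adS a b B with hC
      have skewB : Bᵀ = -B := skew_bra (S_transpose a b) hA
      have skewC : Cᵀ = -C := skew_bra (S_transpose a b) skewB
      have hcube : adS a b C = -B := adS_cube hab hA
      set A0 := A + C with hA0
      set Ap := (-(1:ℂ)/2) • C - (I/2) • B with hAp
      set Am := (-(1:ℂ)/2) • C + (I/2) • B with hAm
      have skewA0 : A0ᵀ = -A0 := skew_add hA skewC
      have skewAp : Apᵀ = -Ap := skew_sub (skew_smul skewC _) (skew_smul skewB _)
      have skewAm : Amᵀ = -Am := skew_add (skew_smul skewC _) (skew_smul skewB _)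
      have hsum : A = A0 + Ap + Am := by
        rw [hA0, hAp, hAm]
        module
      have adA0 : adS a b A0 = (0:ℂ) • A0 := by
        rw [hA0, adS_add, hcube, ← hB, zero_smul]
        abel
      have adAp : adS a b Ap = I • Ap := by
        rw [hAp, adS_sub, adS_smul, adS_smul, hcube, ← hC]
        match_scalars <;> simp [Complex.I_sq] <;> ring_nf <;> simp [Complex.I_sq] <;> ring
      have adAm : adS a b Am = (-I) • Am := by
        rw [hAm, adS_add, adS_smul, adS_smul, hcube, ← hC]
        match_scalars <;> simp [Complex.I_sq] <;> ring_nf <;> simp [Complex.I_sq] <;> ring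
      have endrel : ∀ (X : Matrix (Fin (2*k+1)) (Fin (2*k+1)) ℂ), Xᵀ = -X →
          ∀ s : ℂ, adS a b X = s • X → hj * φ X - φ X * hj = s • φ X := by
        intro X hX s hs
        have h3 := hrep (Hmat k j) X (hskewHmat j) hX
        have h4 : ⁅Hmat k j, X⁆ = s • X := by
          rw [Ring.lie_def, ← hSab]
          exact hs
        rw [h4, map_smul, Ring.lie_def] at h3
        rw [← hhj] at h3
        exact h3.symm
      -- now show membership by induction over the supremum
      refine Submodule.iSup_induction (motive := fun y => φ A y ∈ W)
        (fun n : ℤ => hj.maxGenEigenspace ((n : ℂ) * I)) hx ?_ ?_ ?_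
      · intro nn y hy
        have m0 : φ A0 y ∈ hj.maxGenEigenspace ((nn : ℂ) * I + 0) :=
          mapsTo_maxGen hj (φ A0) 0 (endrel A0 skewA0 0 adA0) _ hy
        have mp : φ Ap y ∈ hj.maxGenEigenspace ((nn : ℂ) * I + I) :=
          mapsTo_maxGen hj (φ Ap) I (endrel Ap skewAp I adAp) _ hy
        have mm : φ Am y ∈ hj.maxGenEigenspace ((nn : ℂ) * I + (-I)) :=
          mapsTo_maxGen hj (φ Am) (-I) (endrel Am skewAm (-I) adAm) _ hy
        have e0 : ((nn : ℂ) * I + 0) = (nn : ℂ) * I := by ring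
        have ep : ((nn : ℂ) * I + I) = ((nn + 1 : ℤ) : ℂ) * I := by push_cast; ring
        have em : ((nn : ℂ) * I + (-I)) = ((nn - 1 : ℤ) : ℂ) * I := by push_cast; ring
        rw [e0] at m0; rw [ep] at mp; rw [em] at mm
        have hy0 : φ A0 y ∈ W := le_iSup (fun n : ℤ => hj.maxGenEigenspace ((n : ℂ) * I)) nn m0
        have hyp : φ Ap y ∈ W :=
          le_iSup (fun n : ℤ => hj.maxGenEigenspace ((n : ℂ) * I)) (nn + 1) mp
        have hym : φ Am y ∈ W :=
          le_iSup (fun n : ℤ => hj.maxGenEigenspace ((n : ℂ) * I)) (nn - 1) mm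
        have : φ A y = φ A0 y + φ Ap y + φ Am y := by
          rw [hsum]
          simp [map_add]
        rw [this]
        exact W.add_mem (W.add_mem hy0 hyp) hym
      · simp only [map_zero]
        exact W.zero_mem
      · intro y₁ y₂ h₁ h₂
        rw [map_add]
        exact W.add_mem h₁ h₂
    have hztop : z ∈ W := by
      have : z ∈ hj.maxGenEigenspace (((0:ℤ) : ℂ) * I) := by
        rw [Module.End.mem_maxGenEigenspace]
        refine ⟨1, ?_⟩
        simp [hz j, hhj]
      exact le_iSup (fun n : ℤ => hj.maxGenEigenspace ((n : ℂ) * I)) 0 this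
    have hWtop : W = ⊤ := by
      rcases hirr W hWinv with hbot | htop
      · rw [hbot] at hztop
        exact absurd (Submodule.mem_bot ℂ |>.mp hztop) hz0
      · exact htop
    have hvW : v ∈ W := hWtop ▸ Submodule.mem_top
    have hvmax : v ∈ hj.maxGenEigenspace (c j) := by
      rw [Module.End.mem_maxGenEigenspace]
      refine ⟨1, ?_⟩
      simp [hvc j, hhj]
    have hsub : W ≤ ⨆ μ ∈ {μ : ℂ | μ ≠ c j}, hj.maxGenEigenspace μ := by
      apply iSup_le
      intro nn
      exact le_biSup _ (fun h => hne nn h.symm)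
    have hdisj := (Module.End.independent_maxGenEigenspace hj).disjoint_biSup
      (show c j ∉ {μ : ℂ | μ ≠ c j} by simp)
    have hv0' : v = 0 := by
      have := hdisj.le_bot (Submodule.mem_inf.mpr ⟨hvmax, hsub hvW⟩)
      exact (Submodule.mem_bot ℂ).mp this
    exact hv0 hv0'

end
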